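/- The positive part tsns₊ of the twisted N=1 Schrödinger-Neveu-Schwarz algebra is generated as a Lie superalgebra by the four elements G_{3/2}, G_{1/2}, Y_{1/2}, M_{1/2}. -/

import Mathlib

noncomputable section

/-- Basis of the twisted N=1 Schrodinger-Neveu-Schwarz algebra.
`L n` is L_n, `G k` is G_{k+1/2}, `Y p` is Y_{p/2}, `M p` is M_{p/2}, `C` is the central element. -/
inductive B : Type
  | L : ℤ → B
  | G : ℤ → B
  | Y : ℤ → B
  | M : ℤ → B
  | C : B
deriving DecidableEq

/-- The underlying vector space of tsns. -/
abbrev V := B →₀ ℂ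

/-- Basis vectors. -/
def e (x : B) : V := Finsupp.single x 1

/-- Parity of a basis element. -/
def isOdd : B → Bool
  | .G _ => true
  | .Y p => if p % 2 = 0 then false else true
  | .M p => if p % 2 = 0 then false else true
  | _ => false

/-- The Koszul sign (-1)^{|x||y|}. -/
def sgn (x y : B) : ℂ := if isOdd x && isOdd y then -1 else 1

/-- The super-bracket on basis elements of tsns. -/
def bb : B → B → V
  | .L n, .L m => ((m : ℂ) - n) • e (.L (n+m)) +
      (if m = -n then (((n:ℂ)^3 - (n:ℂ))/12) • e B.C else 0)
  | .L n, .G k => ((k : ℂ) + 1/2 - (n:ℂ)/2) • e (.G (k+n))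
  | .G k, .L n => (-((k : ℂ) + 1/2 - (n:ℂ)/2)) • e (.G (k+n))
  | .G k, .G l => (2:ℂ) • e (.L (k+l+1)) +
      (if l = -k-1 then ((1 - 4*((k:ℂ)+1/2)^2)/12) • e B.C else 0)
  | .L n, .Y p => (if p % 2 = 0 then (p:ℂ)/2 - (n:ℂ)/2 else (p:ℂ)/2) • e (.Y (p + 2*n))
  | .Y p, .L n => (-(if p % 2 = 0 then (p:ℂ)/2 - (n:ℂ)/2 else (p:ℂ)/2)) • e (.Y (p + 2*n))
  | .L n, .M p => (if p % 2 = 0 then (p:ℂ)/2 else (p:ℂ)/2 + (n:ℂ)/2) • e (.M (p + 2*n))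
  | .M p, .L n => (-(if p % 2 = 0 then (p:ℂ)/2 else (p:ℂ)/2 + (n:ℂ)/2)) • e (.M (p + 2*n))
  | .G k, .Y p => (if p % 2 = 0 then ((p:ℂ)/2 - ((k:ℂ)+1/2))/2 else 2) • e (.Y (p + 2*k + 1))
  | .Y p, .G k => (if p % 2 = 0 then -(((p:ℂ)/2 - ((k:ℂ)+1/2))/2) else 2) • e (.Y (p + 2*k + 1))
  | .G k, .M p => (if p % 2 = 0 then (p:ℂ)/4 else 2) • e (.M (p + 2*k + 1))
  | .M p, .G k => (if p % 2 = 0 then -((p:ℂ)/4) else 2) • e (.M (p + 2*k + 1))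
  | .Y p, .Y q => (if p % 2 = 0 then (if q % 2 = 0 then ((q:ℂ) - p)/4 else (q:ℂ)/4)
      else (if q % 2 = 0 then -((p:ℂ)/4) else 2)) • e (.M (p + q))
  | _, _ => 0

/-- Bilinear extension of the bracket to all of tsns. -/
def br (f g : V) : V := f.sum fun x a => g.sum fun y b => (a * b) • bb x y

/-- The positive part tsns₊. -/
def tsnsPlus : Submodule ℂ V :=
  Submodule.span ℂ {v : V | (∃ n : ℤ, 0 < n ∧ v = e (.L n)) ∨
    (∃ p : ℤ, 0 < p ∧ (v = e (.Y p) ∨ v = e (.M p))) ∨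
    (∃ k : ℤ, 0 ≤ k ∧ v = e (.G k))}


def bbL (x : B) : V →ₗ[ℂ] V := Finsupp.lsum ℂ fun y => LinearMap.toSpanSingleton ℂ V (bb x y)
def brL : V →ₗ[ℂ] V →ₗ[ℂ] V :=
  Finsupp.lsum ℂ fun x => LinearMap.toSpanSingleton ℂ (V →ₗ[ℂ] V) (bbL x)

lemma br_eq (f g : V) : br f g = brL f g := by
  unfold br brL bbL
  simp only [Finsupp.lsum_apply, Finsupp.sum, LinearMap.toSpanSingleton_apply,
    LinearMap.sum_apply, LinearMap.smul_apply, Finset.smul_sum, smul_smul]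

lemma br_single (x y : B) : br (e x) (e y) = bb x y := by
  unfold br e
  rw [Finsupp.sum_single_index, Finsupp.sum_single_index] <;> simp

def P : B → Prop
  | .L n => 0 < n
  | .Y p => 0 < p
  | .M p => 0 < p
  | .G k => 0 ≤ k
  | .C => False

lemma memL {n : ℤ} (h : 0 < n) : e (.L n) ∈ tsnsPlus :=
  Submodule.subset_span (Or.inl ⟨n, h, rfl⟩)
lemma memY {p : ℤ} (h : 0 < p) : e (.Y p) ∈ tsnsPlus :=
  Submodule.subset_span (Or.inr (Or.inl ⟨p, h, Or.inl rfl⟩))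
lemma memM {p : ℤ} (h : 0 < p) : e (.M p) ∈ tsnsPlus :=
  Submodule.subset_span (Or.inr (Or.inl ⟨p, h, Or.inr rfl⟩))
lemma memG {k : ℤ} (h : 0 ≤ k) : e (.G k) ∈ tsnsPlus :=
  Submodule.subset_span (Or.inr (Or.inr ⟨k, h, rfl⟩))

lemma memP {x : B} (h : P x) : e x ∈ tsnsPlus := by
  cases x with
  | L n => exact memL h
  | Y p => exact memY h
  | M p => exact memM h
  | G k => exact memG h
  | C => exact absurd h (by simp [P])

lemma bb_mem {x y : B} (hx : P x) (hy : P y) : bb x y ∈ tsnsPlus := by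
  cases x <;> cases y <;> simp only [bb, P] at hx hy ⊢
  case L.L n m =>
    rw [if_neg (by omega)]
    exact add_mem (Submodule.smul_mem _ _ (memL (by omega))) (zero_mem _)
  case L.G n k => exact Submodule.smul_mem _ _ (memG (by omega))
  case G.L k n => exact Submodule.smul_mem _ _ (memG (by omega))
  case G.G k l =>
    rw [if_neg (by omega)]
    exact add_mem (Submodule.smul_mem _ _ (memL (by omega))) (zero_mem _)
  case L.Y n p => exact Submodule.smul_mem _ _ (memY (by omega))
  case Y.L p n => exact Submodule.smul_mem _ _ (memY (by omega))
  case L.M n p => exact Submodule.smul_mem _ _ (memM (by omega))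
  case M.L p n => exact Submodule.smul_mem _ _ (memM (by omega))
  case G.Y k p => exact Submodule.smul_mem _ _ (memY (by omega))
  case Y.G p k => exact Submodule.smul_mem _ _ (memY (by omega))
  case G.M k p => exact Submodule.smul_mem _ _ (memM (by omega))
  case M.G p k => exact Submodule.smul_mem _ _ (memM (by omega))
  case Y.Y p q => exact Submodule.smul_mem _ _ (memM (by omega))
  all_goals exact zero_mem _

lemma ofS {v : V} (hv : v ∈ {v : V | (∃ n : ℤ, 0 < n ∧ v = e (.L n)) ∨
    (∃ p : ℤ, 0 < p ∧ (v = e (.Y p) ∨ v = e (.M p))) ∨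
    (∃ k : ℤ, 0 ≤ k ∧ v = e (.G k))}) : ∃ x : B, P x ∧ v = e x := by
  rcases hv with ⟨n, hn, rfl⟩ | ⟨p, hp, rfl | rfl⟩ | ⟨k, hk, rfl⟩
  exacts [⟨.L n, hn, rfl⟩, ⟨.Y p, hp, rfl⟩, ⟨.M p, hp, rfl⟩, ⟨.G k, hk, rfl⟩]

lemma brClosure : ∀ x ∈ tsnsPlus, ∀ y ∈ tsnsPlus, br x y ∈ tsnsPlus := by
  intro x hx y hy
  rw [br_eq]
  induction hx using Submodule.span_induction with
  | mem v hv =>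
    obtain ⟨x0, hx0, rfl⟩ := ofS hv
    induction hy using Submodule.span_induction with
    | mem w hw =>
      obtain ⟨y0, hy0, rfl⟩ := ofS hw
      rw [← br_eq, br_single]
      exact bb_mem hx0 hy0
    | zero => rw [map_zero]; exact zero_mem _
    | add a b _ _ ha hb => rw [map_add]; exact add_mem ha hb
    | smul c a _ ha => rw [map_smul]; exact Submodule.smul_mem _ _ ha
  | zero => rw [map_zero]; exact zero_mem _
  | add a b _ _ ha hb => rw [map_add, LinearMap.add_apply]; exact add_mem ha hb
  | smul c a _ ha => rw [map_smul, LinearMap.smul_apply]; exact Submodule.smul_mem _ _ ha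

lemma extract {Wm : Submodule ℂ V} {c : ℂ} (hc : c ≠ 0) {v w : V} (hw : w ∈ Wm)
    (h : w = c • v) : v ∈ Wm := by
  have hv : v = c⁻¹ • w := by rw [h, smul_smul, inv_mul_cancel₀ hc, one_smul]
  rw [hv]; exact Wm.smul_mem _ hw

lemma minimal (W : Submodule ℂ V)
    (hsub : ({e (.G 1), e (.G 0), e (.Y 1), e (.M 1)} : Set V) ⊆ (W : Set V))
    (hcl : ∀ x ∈ W, ∀ y ∈ W, br x y ∈ W) : tsnsPlus ≤ W := by
  have bbW : ∀ {a b : B}, e a ∈ W → e b ∈ W → bb a b ∈ W := fun ha hb => by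
    rw [← br_single]; exact hcl _ ha _ hb
  have wG1 : e (.G 1) ∈ W := hsub (by simp)
  have wG0 : e (.G 0) ∈ W := hsub (by simp)
  have wY1 : e (.Y 1) ∈ W := hsub (by simp)
  have wM1 : e (.M 1) ∈ W := hsub (by simp)
  have wL1 : e (.L 1) ∈ W := by
    refine extract (two_ne_zero) (bbW wG0 wG0) ?_
    simp only [bb]; rw [if_neg (by omega)]; norm_num
  have wL2 : e (.L 2) ∈ W := by
    refine extract (two_ne_zero) (bbW wG0 wG1) ?_
    simp only [bb]; rw [if_neg (by omega)]; norm_num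
  -- step lemmas
  have stepL : ∀ n : ℤ, 2 ≤ n → e (.L n) ∈ W → e (.L (n+1)) ∈ W := by
    intro n hn h
    refine extract (c := (n:ℂ) - 1) ?_ (bbW wL1 h) ?_
    · intro hc
      have : (n:ℂ) = 1 := by linear_combination hc
      exact absurd (by exact_mod_cast this) (by omega)
    · simp only [bb]; rw [if_neg (by omega)]
      norm_num [add_comm (1:ℤ) n]
  have stepG : ∀ k : ℤ, 1 ≤ k → e (.G k) ∈ W → e (.G (k+1)) ∈ W := by
    intro k hk h
    refine extract (c := (k:ℂ)) ?_ (bbW wL1 h) ?_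
    · exact_mod_cast (by omega : k ≠ 0)
    · simp only [bb]; norm_num
  have hL : ∀ n : ℤ, 0 < n → e (.L n) ∈ W := by
    have key : ∀ m : ℕ, e (.L (m+1:ℤ)) ∈ W := by
      intro m
      induction m with
      | zero => exact_mod_cast wL1
      | succ k ih =>
        match k, ih with
        | 0, _ => exact_mod_cast wL2
        | (j+1), ih =>
          have := stepL ((j+1:ℕ)+1) (by push_cast; omega) ih
          convert this using 3; omega
    intro n hn
    obtain ⟨m, rfl⟩ : ∃ m : ℕ, n = (m:ℤ)+1 := ⟨(n-1).toNat, by omega⟩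
    exact key m
  have hG : ∀ k : ℤ, 0 ≤ k → e (.G k) ∈ W := by
    have key : ∀ m : ℕ, e (.G (m:ℤ)) ∈ W := by
      intro m
      induction m with
      | zero => exact_mod_cast wG0
      | succ k ih =>
        match k, ih with
        | 0, _ => exact_mod_cast wG1
        | (j+1), ih =>
          have := stepG ((j+1:ℕ)) (by push_cast; omega) ih
          convert this using 3; omega
    intro k hk
    obtain ⟨m, rfl⟩ : ∃ m : ℕ, k = (m:ℤ) := ⟨k.toNat, by omega⟩
    exact key m
  have stepYodd : ∀ p : ℤ, p % 2 = 1 → 0 < p → e (.Y p) ∈ W → e (.Y (p+2)) ∈ W := by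
    intro p hp hp0 h
    refine extract (c := (p:ℂ)/2) ?_ (bbW wL1 h) ?_
    · have : (p:ℂ) ≠ 0 := by exact_mod_cast (by omega : p ≠ 0)
      simpa using this
    · simp only [bb]; rw [if_neg (by omega)]; norm_num
  have stepYeven : ∀ p : ℤ, p % 2 = 1 → e (.Y p) ∈ W → e (.Y (p+1)) ∈ W := by
    intro p hp h
    refine extract (two_ne_zero) (bbW wG0 h) ?_
    simp only [bb]; rw [if_neg (by omega)]; norm_num
  have stepModd : ∀ p : ℤ, p % 2 = 1 → 0 < p → e (.M p) ∈ W → e (.M (p+2)) ∈ W := by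
    intro p hp hp0 h
    refine extract (c := (p:ℂ)/2 + 1/2) ?_ (bbW wL1 h) ?_
    · intro hc
      have h1 : (p:ℂ) = -1 := by linear_combination 2*hc
      have h2 : p = -1 := by exact_mod_cast h1
      omega
    · simp only [bb]; rw [if_neg (by omega)]; norm_num
  have stepMeven : ∀ p : ℤ, p % 2 = 1 → e (.M p) ∈ W → e (.M (p+1)) ∈ W := by
    intro p hp h
    refine extract (two_ne_zero) (bbW wG0 h) ?_
    simp only [bb]; rw [if_neg (by omega)]; norm_num
  have hYodd : ∀ m : ℕ, e (.Y (2*m+1:ℤ)) ∈ W := by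
    intro m
    induction m with
    | zero => exact_mod_cast wY1
    | succ k ih =>
      have := stepYodd (2*k+1) (by omega) (by omega) ih
      convert this using 3; omega
  have hModd : ∀ m : ℕ, e (.M (2*m+1:ℤ)) ∈ W := by
    intro m
    induction m with
    | zero => exact_mod_cast wM1
    | succ k ih =>
      have := stepModd (2*k+1) (by omega) (by omega) ih
      convert this using 3; omega
  have hY : ∀ p : ℤ, 0 < p → e (.Y p) ∈ W := by
    intro p hp
    rcases Int.even_or_odd p with he | ho
    · obtain ⟨m, rfl⟩ : ∃ m : ℕ, p = (2*m+1:ℤ)+1 := by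
        obtain ⟨t, ht⟩ := he
        exact ⟨(t-1).toNat, by omega⟩
      exact stepYeven _ (by omega) (hYodd m)
    · obtain ⟨m, rfl⟩ : ∃ m : ℕ, p = (2*m+1:ℤ) := by
        obtain ⟨t, ht⟩ := ho
        exact ⟨t.toNat, by omega⟩
      exact hYodd m
  have hM : ∀ p : ℤ, 0 < p → e (.M p) ∈ W := by
    intro p hp
    rcases Int.even_or_odd p with he | ho
    · obtain ⟨m, rfl⟩ : ∃ m : ℕ, p = (2*m+1:ℤ)+1 := by
        obtain ⟨t, ht⟩ := he
        exact ⟨(t-1).toNat, by omega⟩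
      exact stepMeven _ (by omega) (hModd m)
    · obtain ⟨m, rfl⟩ : ∃ m : ℕ, p = (2*m+1:ℤ) := by
        obtain ⟨t, ht⟩ := ho
        exact ⟨t.toNat, by omega⟩
      exact hModd m
  rw [tsnsPlus, Submodule.span_le]
  rintro v (⟨n, hn, rfl⟩ | ⟨p, hp, rfl | rfl⟩ | ⟨k, hk, rfl⟩)
  exacts [hL n hn, hY p hp, hM p hp, hG k hk]


/-- tsns₊ is generated as a Lie superalgebra by G_{3/2}, G_{1/2}, Y_{1/2},
M_{1/2}: it contains the generators, is closed under the bracket, and is the smallest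
bracket-closed subspace containing them. -/
theorem tsnsPlus_generated :
    ({e (.G 1), e (.G 0), e (.Y 1), e (.M 1)} : Set V) ⊆ (tsnsPlus : Set V) ∧
    (∀ x ∈ tsnsPlus, ∀ y ∈ tsnsPlus, br x y ∈ tsnsPlus) ∧
    (∀ W : Submodule ℂ V, ({e (.G 1), e (.G 0), e (.Y 1), e (.M 1)} : Set V) ⊆ (W : Set V) →
      (∀ x ∈ W, ∀ y ∈ W, br x y ∈ W) → tsnsPlus ≤ W) := by
  refine ⟨?_, brClosure, minimal⟩
  intro v hv
  simp only [Set.mem_insert_iff, Set.mem_singleton_iff] at hv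
  rcases hv with rfl | rfl | rfl | rfl
  exacts [memG one_pos.le, memG le_rfl, memY one_pos, memM one_pos]
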